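/- Let N ≥ 1, let J be the standard 2N×2N complex-structure matrix and let P be a real symplectic 2N×2N matrix. Let θ : ℝ → ℝ, λ : ℝ → ℝ and v : ℝ → ℝ^{2N} be differentiable at 0, and suppose: cos θ(0) = 1 (hence sin θ(0) = 0); v(0) ≠ 0 and P·v(0) = v(0); λ takes real values; and for all t, (cos θ(t)·I + sin θ(t)·J)·P·v(t) = λ(t)·v(t). Then θ'(0) = 0. -/

import Mathlib

open Matrix

private lemma mulVec_dot {n : Type*} [Fintype n] (A : Matrix n n ℝ) (x y : n → ℝ) :
    (A *ᵥ x) ⬝ᵥ y = x ⬝ᵥ (Aᵀ *ᵥ y) := by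
  rw [dotProduct_mulVec, vecMul_transpose]

/-- Let `P` be a real symplectic `2N×2N` matrix, and let `θ, λ, v` be
differentiable at `0` with `cos θ(0) = 1`, `v(0) ≠ 0`, `P·v(0) = v(0)`, and
`(cos θ(t)·I + sin θ(t)·J)·P·v(t) = λ(t)·v(t)` for all `t`. Then `θ'(0) = 0`. -/
theorem deriv_theta_eq_zero_of_real_eigenvalue_family
    (N : ℕ) (hN : 1 ≤ N)
    (P : Matrix (Fin N ⊕ Fin N) (Fin N ⊕ Fin N) ℝ)
    (hP : Pᵀ * Matrix.J (Fin N) ℝ * P = Matrix.J (Fin N) ℝ)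
    (θ lam : ℝ → ℝ) (v : ℝ → ((Fin N ⊕ Fin N) → ℝ))
    (hθ : DifferentiableAt ℝ θ 0)
    (hlam : DifferentiableAt ℝ lam 0)
    (hv : DifferentiableAt ℝ v 0)
    (hθ0 : Real.cos (θ 0) = 1)
    (hv0 : v 0 ≠ 0)
    (hfix : P.mulVec (v 0) = v 0)
    (heig : ∀ t : ℝ,
      ((Real.cos (θ t)) • (1 : Matrix (Fin N ⊕ Fin N) (Fin N ⊕ Fin N) ℝ)
          + (Real.sin (θ t)) • Matrix.J (Fin N) ℝ).mulVec (P.mulVec (v t))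
        = lam t • v t) :
    deriv θ 0 = 0 := by
  set Jm := Matrix.J (Fin N) ℝ with hJm
  -- sin θ(0) = 0
  have hsin0 : Real.sin (θ 0) = 0 := by
    have h := Real.sin_sq_add_cos_sq (θ 0)
    have h2 : Real.sin (θ 0) ^ 2 = 0 := by nlinarith
    exact (pow_eq_zero_iff (two_ne_zero)).mp h2
  -- lam 0 = 1
  have hlam0 : lam 0 = 1 := by
    have h0 := heig 0
    rw [hθ0, hsin0, zero_smul, add_zero, one_smul, one_mulVec, hfix] at h0
    by_contra hne
    have : (lam 0 - 1) • v 0 = 0 := by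
      rw [sub_smul, one_smul, ← h0, sub_self]
    rcases smul_eq_zero.mp this with h | h
    · exact hne (by linarith [sub_eq_zero.mp h])
    · exact hv0 h
  set θ' := deriv θ 0 with hθ'
  set l' := deriv lam 0 with hl'
  set v' := deriv v 0 with hv'
  have hθd : HasDerivAt θ θ' 0 := hθ.hasDerivAt
  have hlamd : HasDerivAt lam l' 0 := hlam.hasDerivAt
  have hvd : HasDerivAt v v' 0 := hv.hasDerivAt
  -- derivative of P *ᵥ v t
  have hPv : HasDerivAt (fun t => P *ᵥ v t) (P *ᵥ v') 0 := by
    have := ((Matrix.mulVecLin P).toContinuousLinearMap).hasFDerivAt.comp_hasDerivAt 0 hvd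
    simpa [Function.comp_def] using this
  have hJPv : HasDerivAt (fun t => Jm *ᵥ (P *ᵥ v t)) (Jm *ᵥ (P *ᵥ v')) 0 := by
    have := ((Matrix.mulVecLin Jm).toContinuousLinearMap).hasFDerivAt.comp_hasDerivAt 0 hPv
    simpa [Function.comp_def, mulVec_mulVec] using this
  have hcos : HasDerivAt (fun t => Real.cos (θ t)) (-Real.sin (θ 0) * θ') 0 := hθd.cos
  have hsin : HasDerivAt (fun t => Real.sin (θ t)) (Real.cos (θ 0) * θ') 0 := hθd.sin
  have hL : HasDerivAt
      (fun t => Real.cos (θ t) • (P *ᵥ v t) + Real.sin (θ t) • (Jm *ᵥ (P *ᵥ v t)))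
      ((Real.cos (θ 0) • (P *ᵥ v') + (-Real.sin (θ 0) * θ') • (P *ᵥ v 0))
        + (Real.sin (θ 0) • (Jm *ᵥ (P *ᵥ v')) + (Real.cos (θ 0) * θ') • (Jm *ᵥ (P *ᵥ v 0)))) 0 :=
    (hcos.smul hPv).add (hsin.smul hJPv)
  have hR : HasDerivAt (fun t => lam t • v t) (lam 0 • v' + l' • v 0) 0 := hlamd.smul hvd
  have heqfun : (fun t => Real.cos (θ t) • (P *ᵥ v t) + Real.sin (θ t) • (Jm *ᵥ (P *ᵥ v t)))
      = fun t => lam t • v t := by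
    funext t
    rw [← heig t, add_mulVec, smul_mulVec, smul_mulVec, one_mulVec]
  rw [heqfun] at hL
  have key := hL.unique hR
  rw [hθ0, hsin0, hfix, hlam0] at key
  simp only [one_smul, zero_smul, neg_zero, zero_mul, one_mul, zero_add, add_zero,
    smul_zero] at key
  -- key : P *ᵥ v' + θ' • (Jm *ᵥ v 0) = v' + l' • v 0
  set u := Jm *ᵥ v 0 with hu
  have keyd := congrArg (fun w => u ⬝ᵥ w) key
  simp only [dotProduct_add, dotProduct_smul, smul_eq_mul] at keyd
  -- compute each term
  have hJT : Jmᵀ = -Jm := Matrix.J_transpose (Fin N) ℝ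
  have hJPT : (Jm * P)ᵀ * P = -Jm := by
    rw [transpose_mul, hJT, Matrix.mul_neg, Matrix.neg_mul, hP]
  have h1 : u ⬝ᵥ (P *ᵥ v') = u ⬝ᵥ v' := by
    have hu2 : u = (Jm * P) *ᵥ v 0 := by rw [← mulVec_mulVec, hfix]
    have ha : u ⬝ᵥ (P *ᵥ v') = v 0 ⬝ᵥ ((-Jm) *ᵥ v') := by
      rw [hu2, mulVec_dot, mulVec_mulVec, hJPT]
    have hb : u ⬝ᵥ v' = v 0 ⬝ᵥ ((-Jm) *ᵥ v') := by
      rw [hu, mulVec_dot, hJT]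
    rw [ha, hb]
  have h2 : u ⬝ᵥ u = v 0 ⬝ᵥ v 0 := by
    rw [hu, mulVec_dot, mulVec_mulVec, hJT, Matrix.neg_mul, Matrix.J_squared, neg_neg,
      one_mulVec]
  have h3 : u ⬝ᵥ v 0 = 0 := by
    have ha : u ⬝ᵥ v 0 = -(u ⬝ᵥ v 0) := by
      nth_rewrite 1 [hu, mulVec_dot, hJT, neg_mulVec, dotProduct_neg, dotProduct_comm]
      rw [hu]
    linarith
  rw [h1, h2, h3] at keyd
  have hvv : v 0 ⬝ᵥ v 0 ≠ 0 := fun h => hv0 (dotProduct_self_eq_zero.mp h)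
  have : θ' * (v 0 ⬝ᵥ v 0) = 0 := by linarith
  exact (mul_eq_zero.mp this).resolve_right hvv
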